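/- (Binomial moments.) Let q be a real number with q > 0 and q ≠ 1, and let σ_q = (1/√q)·[[1, q−1],[1, −1]]. Suppose W(x,y) = Σ_{i=0}^n A_i x^{n−i} y^i ∈ ℂ[x,y] with A₀ = 1 is σ_q-invariant, i.e., W(( x + (q−1)y )/√q, ( x − y )/√q) = W(x,y). Then for every ν = 0, 1, …, n: Σ_{i=0}^{n−ν} C(n−i, ν)·A_i = q^{n/2−ν}·Σ_{i=0}^{ν} C(n−i, n−ν)·A_i. -/

import Mathlib

/- STATEMENT 15 (binomial moments): if W = ∑_{i=0}^n A_i x^{n-i}y^i with A₀ = 1 is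
σ_q-invariant (q > 0, q ≠ 1), then for ν = 0, 1, …, n:
∑_{i=0}^{n-ν} C(n-i,ν) A_i = q^{n/2-ν} ∑_{i=0}^{ν} C(n-i,n-ν) A_i. -/

noncomputable section

abbrev Cxy : Type := MvPolynomial (Fin 2) ℂ

/-- The action of `σ_q = (1/√q)[[1,q-1],[1,-1]]`: substitute
`x ↦ (x+(q-1)y)/√q`, `y ↦ (x-y)/√q`. -/
def actSigma (q : ℝ) (f : Cxy) : Cxy :=
  MvPolynomial.aeval
    ![MvPolynomial.C ((Real.sqrt q : ℂ))⁻¹ *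
        (MvPolynomial.X 0 + MvPolynomial.C ((q : ℂ) - 1) * MvPolynomial.X 1),
      MvPolynomial.C ((Real.sqrt q : ℂ))⁻¹ * (MvPolynomial.X 0 - MvPolynomial.X 1)] f

theorem binomial_moments (q : ℝ) (hq0 : 0 < q) (hq1 : q ≠ 1) (n : ℕ)
    (A : ℕ → ℂ) (hA0 : A 0 = 1) (W : Cxy)
    (hW : W = ∑ i ∈ Finset.range (n + 1),
      MvPolynomial.C (A i) * MvPolynomial.X 0 ^ (n - i) * MvPolynomial.X 1 ^ i)
    (hinv : actSigma q W = W) :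
    ∀ ν ≤ n,
      ∑ i ∈ Finset.range (n - ν + 1), ((n - i).choose ν : ℂ) * A i
        = ((q ^ ((n : ℝ) / 2 - (ν : ℝ)) : ℝ) : ℂ) *
            ∑ i ∈ Finset.range (ν + 1), ((n - i).choose (n - ν) : ℂ) * A i := by
  intro ν hν
  set s : ℂ := (((Real.sqrt q : ℝ) : ℂ))⁻¹ with hs
  have hPhi := congrArg (MvPolynomial.aeval (R := ℂ) ![(Polynomial.X : Polynomial ℂ) + 1, 1]) hinv
  rw [hW] at hPhi
  simp only [actSigma, map_sum, map_mul, map_pow, map_add, map_sub, MvPolynomial.aeval_C,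
    MvPolynomial.aeval_X, Matrix.cons_val_zero, Matrix.cons_val_one, Matrix.head_cons,
    Polynomial.algebraMap_eq, MvPolynomial.algebraMap_eq, one_pow, mul_one,
    Polynomial.C_1] at hPhi
  have key : ∑ i ∈ Finset.range (n+1), Polynomial.C (A i * s ^ n) *
        ((Polynomial.X + Polynomial.C (q:ℂ)) ^ (n - i) * Polynomial.X ^ i)
      = ∑ i ∈ Finset.range (n+1), Polynomial.C (A i) * (Polynomial.X + 1) ^ (n - i) := by
    rw [← hPhi]
    refine Finset.sum_congr rfl fun i hi => ?_
    have hin : i ≤ n := Nat.lt_succ_iff.mp (Finset.mem_range.mp hi)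
    have hsn : s ^ n = s ^ (n - i) * s ^ i := by rw [← pow_add, Nat.sub_add_cancel hin]
    rw [hsn]
    rw [show Polynomial.X + 1 + (Polynomial.C (q:ℂ) - 1) = Polynomial.X + Polynomial.C (q:ℂ)
          from by ring,
        show Polynomial.X + 1 - 1 = (Polynomial.X : Polynomial ℂ) from by ring,
        mul_pow, mul_pow]
    simp only [map_mul, map_pow]
    ring
  have hcoef := congrArg (fun p => Polynomial.coeff p ν) key
  simp only [Polynomial.finset_sum_coeff, Polynomial.coeff_C_mul, ← mul_assoc,
    Polynomial.coeff_mul_X_pow', Polynomial.coeff_X_add_C_pow,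
    Polynomial.coeff_X_add_one_pow] at hcoef
  have hR : ∑ x ∈ Finset.range (n + 1), A x * ((n - x).choose ν : ℂ)
      = ∑ i ∈ Finset.range (n - ν + 1), ((n - i).choose ν : ℂ) * A i := by
    rw [← Finset.sum_subset (Finset.range_subset_range.mpr (by omega : n - ν + 1 ≤ n + 1))]
    · exact Finset.sum_congr rfl fun i _ => mul_comm _ _
    · intro i hi hni
      simp only [Finset.mem_range] at hi hni
      rw [Nat.choose_eq_zero_of_lt (by omega), Nat.cast_zero, mul_zero]
  have hL : (∑ x ∈ Finset.range (n + 1), if x ≤ ν then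
        A x * s ^ n * (q:ℂ) ^ (n - x - (ν - x)) * ((n - x).choose (ν - x) : ℂ) else 0)
      = (s ^ n * (q:ℂ) ^ (n - ν)) * ∑ i ∈ Finset.range (ν + 1),
          ((n - i).choose (n - ν) : ℂ) * A i := by
    rw [Finset.mul_sum,
      ← Finset.sum_subset (Finset.range_subset_range.mpr (by omega : ν + 1 ≤ n + 1))]
    · refine Finset.sum_congr rfl fun i hi => ?_
      have hiν : i ≤ ν := Nat.lt_succ_iff.mp (Finset.mem_range.mp hi)
      have h1 : n - i - (ν - i) = n - ν := by omega
      have h2 : (n - i).choose (ν - i) = (n - i).choose (n - ν) := by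
        rw [← h1]; exact (Nat.choose_symm (by omega)).symm
      rw [if_pos hiν, h1, h2]; ring
    · intro i hi hni
      simp only [Finset.mem_range] at hi hni
      rw [if_neg (by omega)]
  have hconst : s ^ n * (q:ℂ) ^ (n - ν) = ((q ^ ((n : ℝ) / 2 - (ν : ℝ)) : ℝ) : ℂ) := by
    have e1 : (Real.sqrt q)⁻¹ ^ n = q ^ (-(n:ℝ)/2) := by
      rw [Real.sqrt_eq_rpow, ← Real.rpow_neg hq0.le,
        ← Real.rpow_natCast (q ^ (-(1/2) : ℝ)) n, ← Real.rpow_mul hq0.le]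
      congr 1; ring
    have e2 : (q : ℝ) ^ (n - ν) = q ^ (((n:ℝ) - (ν:ℝ))) := by
      rw [← Real.rpow_natCast q (n - ν), Nat.cast_sub hν]
    have hreal : (Real.sqrt q)⁻¹ ^ n * q ^ (n - ν) = q ^ ((n:ℝ)/2 - (ν:ℝ)) := by
      rw [e1, e2, ← Real.rpow_add hq0]; congr 1; ring
    rw [← hreal]; push_cast [hs]; ring
  rw [← hR, ← hcoef, hL, hconst]


end
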